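/- For every n ≥ 1, the number of involutions in S_n avoiding the pattern 654321 equals the number of involutions in S_n avoiding the pattern 564312, i.e., |I_n(654321)| = |I_n(564312)|. -/

import Mathlib

/-- A permutation π of {0,…,n-1} contains the pattern τ of {0,…,k-1} if some
increasing sequence of positions induces values in the same relative order as τ. -/
def PermContains {n k : ℕ} (π : Equiv.Perm (Fin n)) (τ : Equiv.Perm (Fin k)) : Prop :=
  ∃ f : Fin k → Fin n, StrictMono f ∧ ∀ a b : Fin k, τ a < τ b ↔ π (f a) < π (f b)

/-- |I_n(τ)|: the number of τ-avoiding involutions in the symmetric group S_n. -/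
noncomputable def IAvoidCount (n : ℕ) {k : ℕ} (τ : Equiv.Perm (Fin k)) : ℕ :=
  {π : Equiv.Perm (Fin n) | π⁻¹ = π ∧ ¬ PermContains π τ}.ncard

/-- The pattern 654321 (one-line notation, here zero-based). -/
def p654321 : Equiv.Perm (Fin 6) :=
  ⟨![5, 4, 3, 2, 1, 0], ![5, 4, 3, 2, 1, 0], by decide, by decide⟩

/-- The pattern 564312 (one-line notation, here zero-based). -/
def p564312 : Equiv.Perm (Fin 6) :=
  ⟨![4, 5, 3, 2, 0, 1], ![4, 5, 3, 2, 0, 1], by decide, by decide⟩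

open Finset

noncomputable section Stmt7Aux

open scoped Classical

/-! ### Abstract matching layer -/

section Matching

variable {α : Type*} [LinearOrder α] (H : α → α → Prop)

/-- σ is an H-matching between finsets C and V. -/
def Mtch (C V : Finset α) (σ : α → α) : Prop :=
  Set.BijOn σ ↑C ↑V ∧ ∀ c ∈ C, H c (σ c)

/-- σ is increasing on C. -/
def Incr (C : Finset α) (σ : α → α) : Prop :=
  ∀ c ∈ C, ∀ c' ∈ C, c < c' → σ c < σ c'

/-- σ has no "12-pattern with corner in the board". -/
def Good (C : Finset α) (σ : α → α) : Prop :=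
  ∀ c ∈ C, ∀ c' ∈ C, c < c' → σ c < σ c' → ¬ H c' (σ c)

/-- monotone board relation -/
def MonoH : Prop := ∀ ⦃c c' v v'⦄, H c v → c' ≤ c → v ≤ v' → H c' v'

variable {H}

theorem Mtch.erase {C V : Finset α} {σ : α → α} (h : Mtch H C V σ) {c : α} (hc : c ∈ C) :
    Mtch H (C.erase c) (V.erase (σ c)) σ := by
  obtain ⟨⟨hmap, hinj, hsurj⟩, hH⟩ := h
  refine ⟨⟨?_, ?_, ?_⟩, fun x hx => hH x (mem_of_mem_erase hx)⟩
  · intro x hx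
    rw [Finset.coe_erase] at hx ⊢
    rcases hx with ⟨hxC, hxc⟩
    refine ⟨hmap hxC, ?_⟩
    simp only [Set.mem_singleton_iff] at *
    exact fun e => hxc (hinj hxC hc e)
  · intro x hx y hy e
    rw [Finset.coe_erase] at hx hy
    exact hinj hx.1 hy.1 e
  · intro v hv
    rw [Finset.coe_erase] at hv
    rcases hv with ⟨hvV, hvne⟩
    obtain ⟨x, hxC, hxe⟩ := hsurj hvV
    refine ⟨x, ?_, hxe⟩
    rw [Finset.coe_erase]
    refine ⟨hxC, ?_⟩
    simp only [Set.mem_singleton_iff] at *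
    rintro rfl; exact hvne hxe.symm

theorem mtch_card {C V : Finset α} {σ : α → α} (h : Mtch H C V σ) : C.card = V.card := by
  classical
  have : V = C.image σ := by
    apply Finset.ext
    intro v
    simp only [Finset.mem_image]
    constructor
    · intro hv
      obtain ⟨x, hx, he⟩ := h.1.2.2 (by exact_mod_cast hv)
      exact ⟨x, by exact_mod_cast hx, he⟩
    · rintro ⟨x, hx, rfl⟩
      exact_mod_cast h.1.1 (by exact_mod_cast hx)
  rw [this]
  exact (Finset.card_image_of_injOn (by exact_mod_cast h.1.2.1)).symm

theorem mtch_nonempty_v {C V : Finset α} {σ : α → α} (h : Mtch H C V σ) (hne : C.Nonempty) :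
    V.Nonempty := by
  obtain ⟨c, hc⟩ := hne
  exact ⟨σ c, by exact_mod_cast h.1.1 (by exact_mod_cast hc)⟩

/-- An increasing matching sends max to max. -/
theorem incr_max {C V : Finset α} {σ : α → α} (h : Mtch H C V σ) (hi : Incr C σ)
    (hne : C.Nonempty) : σ (C.max' hne) = V.max' (mtch_nonempty_v h hne) := by
  have hmem : σ (C.max' hne) ∈ V := by exact_mod_cast h.1.1 (by exact_mod_cast C.max'_mem hne)
  apply le_antisymm (Finset.le_max' _ _ hmem)
  apply Finset.max'_le
  intro v hv
  obtain ⟨x, hx, rfl⟩ := h.1.2.2 (by exact_mod_cast hv)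
  have hx' : x ∈ C := by exact_mod_cast hx
  rcases lt_or_eq_of_le (Finset.le_max' C x hx') with hlt | he
  · exact le_of_lt (hi x hx' _ (C.max'_mem hne) hlt)
  · rw [he]

/-- A good matching sends max column to minimal feasible value. -/
theorem good_max {C V : Finset α} {σ : α → α} (h : Mtch H C V σ) (hg : Good H C σ)
    (hne : C.Nonempty) :
    ∀ v ∈ V, H (C.max' hne) v → σ (C.max' hne) ≤ v := by
  intro v hv hHv
  by_contra hcon
  push_neg at hcon
  obtain ⟨x, hx, rfl⟩ := h.1.2.2 (by exact_mod_cast hv)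
  have hx' : x ∈ C := by exact_mod_cast hx
  have hxne : x ≠ C.max' hne := by
    rintro rfl; exact absurd rfl (ne_of_lt hcon)
  have hxlt : x < C.max' hne := lt_of_le_of_ne (Finset.le_max' C x hx') hxne
  exact hg x hx' _ (C.max'_mem hne) hxlt hcon hHv

theorem incr_unique_aux : ∀ (k : ℕ) (C V : Finset α) (σ σ' : α → α), C.card ≤ k →
    Mtch H C V σ → Incr C σ → Mtch H C V σ' → Incr C σ' → ∀ c ∈ C, σ c = σ' c := by
  classical
  intro k
  induction k with
  | zero =>
    intro C V σ σ' hcard _ _ _ _ c hc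
    rw [Nat.le_zero, Finset.card_eq_zero] at hcard
    subst hcard; simp at hc
  | succ k IH =>
    intro C V σ σ' hcard h hi h' hi' c hc
    have hne : C.Nonempty := ⟨c, hc⟩
    have hmax := incr_max h hi hne
    have hmax' := incr_max h' hi' hne
    by_cases hcm : c = C.max' hne
    · rw [hcm, hmax, hmax']
    · refine IH (C.erase (C.max' hne)) (V.erase (σ (C.max' hne))) σ σ'
        (by rw [Finset.card_erase_of_mem (C.max'_mem hne)]; omega)
        (h.erase (C.max'_mem hne))
        (fun a ha b hb hab => hi a (mem_of_mem_erase ha) b (mem_of_mem_erase hb) hab)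
        (by rw [hmax, ← hmax']; exact h'.erase (C.max'_mem hne))
        (fun a ha b hb hab => hi' a (mem_of_mem_erase ha) b (mem_of_mem_erase hb) hab)
        c (Finset.mem_erase.mpr ⟨hcm, hc⟩)

theorem incr_unique {C V : Finset α} {σ σ' : α → α}
    (h : Mtch H C V σ) (hi : Incr C σ) (h' : Mtch H C V σ') (hi' : Incr C σ') :
    ∀ c ∈ C, σ c = σ' c :=
  incr_unique_aux C.card C V σ σ' le_rfl h hi h' hi'

theorem good_unique_aux : ∀ (k : ℕ) (C V : Finset α) (σ σ' : α → α), C.card ≤ k →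
    Mtch H C V σ → Good H C σ → Mtch H C V σ' → Good H C σ' → ∀ c ∈ C, σ c = σ' c := by
  classical
  intro k
  induction k with
  | zero =>
    intro C V σ σ' hcard _ _ _ _ c hc
    rw [Nat.le_zero, Finset.card_eq_zero] at hcard
    subst hcard; simp at hc
  | succ k IH =>
    intro C V σ σ' hcard h hg h' hg' c hc
    have hne : C.Nonempty := ⟨c, hc⟩
    have hm : σ (C.max' hne) = σ' (C.max' hne) := by
      have h1 : σ (C.max' hne) ∈ V := by
        exact_mod_cast h.1.1 (by exact_mod_cast C.max'_mem hne)
      have h2 : σ' (C.max' hne) ∈ V := by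
        exact_mod_cast h'.1.1 (by exact_mod_cast C.max'_mem hne)
      have hH1 : H (C.max' hne) (σ (C.max' hne)) := h.2 _ (C.max'_mem hne)
      have hH2 : H (C.max' hne) (σ' (C.max' hne)) := h'.2 _ (C.max'_mem hne)
      exact le_antisymm (good_max h hg hne _ h2 hH2) (good_max h' hg' hne _ h1 hH1)
    by_cases hcm : c = C.max' hne
    · rw [hcm, hm]
    · refine IH (C.erase (C.max' hne)) (V.erase (σ (C.max' hne))) σ σ'
        (by rw [Finset.card_erase_of_mem (C.max'_mem hne)]; omega)
        (h.erase (C.max'_mem hne))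
        (fun a ha b hb hab h2 => hg a (mem_of_mem_erase ha) b (mem_of_mem_erase hb) hab h2)
        (by rw [hm]; exact h'.erase (C.max'_mem hne))
        (fun a ha b hb hab h2 => hg' a (mem_of_mem_erase ha) b (mem_of_mem_erase hb) hab h2)
        c (Finset.mem_erase.mpr ⟨hcm, hc⟩)

theorem good_unique {C V : Finset α} {σ σ' : α → α}
    (h : Mtch H C V σ) (hg : Good H C σ) (h' : Mtch H C V σ') (hg' : Good H C σ') :
    ∀ c ∈ C, σ c = σ' c :=
  good_unique_aux C.card C V σ σ' le_rfl h hg h' hg'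


/-- swap two columns of a matching -/
theorem mtch_swap {C V : Finset α} {σ : α → α} (h : Mtch H C V σ) {c₀ c₁ : α}
    (h0 : c₀ ∈ C) (h1 : c₁ ∈ C) (hH0 : H c₀ (σ c₁)) (hH1 : H c₁ (σ c₀)) :
    Mtch H C V (σ ∘ ⇑(Equiv.swap c₀ c₁)) := by
  classical
  have hswapC : ∀ x ∈ C, Equiv.swap c₀ c₁ x ∈ C := by
    intro x hx
    rcases eq_or_ne x c₀ with rfl | hx0
    · rw [Equiv.swap_apply_left]; exact h1
    rcases eq_or_ne x c₁ with rfl | hx1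
    · rw [Equiv.swap_apply_right]; exact h0
    · rw [Equiv.swap_apply_of_ne_of_ne hx0 hx1]; exact hx
  obtain ⟨⟨hmap, hinj, hsurj⟩, hH⟩ := h
  refine ⟨⟨?_, ?_, ?_⟩, ?_⟩
  · intro x hx
    exact hmap (by exact_mod_cast hswapC x (by exact_mod_cast hx))
  · intro x hx y hy e
    have := hinj (by exact_mod_cast hswapC x (by exact_mod_cast hx))
      (by exact_mod_cast hswapC y (by exact_mod_cast hy)) e
    exact (Equiv.swap c₀ c₁).injective this
  · intro v hv
    obtain ⟨x, hx, he⟩ := hsurj hv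
    refine ⟨Equiv.swap c₀ c₁ x, ?_, ?_⟩
    · exact_mod_cast hswapC x (by exact_mod_cast hx)
    · simpa using he
  · intro c hc
    simp only [Function.comp_apply]
    rcases eq_or_ne c c₀ with rfl | hc0
    · rw [Equiv.swap_apply_left]; exact hH0
    rcases eq_or_ne c c₁ with rfl | hc1
    · rw [Equiv.swap_apply_right]; exact hH1
    · rw [Equiv.swap_apply_of_ne_of_ne hc0 hc1]; exact hH c hc

/-- extend a matching on erased sets by one pair -/
theorem mtch_extend {C V : Finset α} {σ₂ : α → α} {c₀ v₀ : α} (hc : c₀ ∈ C) (hv : v₀ ∈ V)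
    (h : Mtch H (C.erase c₀) (V.erase v₀) σ₂) (hH0 : H c₀ v₀) :
    Mtch H C V (Function.update σ₂ c₀ v₀) := by
  classical
  obtain ⟨⟨hmap, hinj, hsurj⟩, hH⟩ := h
  have hval : ∀ x ∈ C.erase c₀, σ₂ x ∈ V.erase v₀ := by
    intro x hx; exact_mod_cast hmap (by exact_mod_cast hx)
  refine ⟨⟨?_, ?_, ?_⟩, ?_⟩
  · intro x hx
    rcases eq_or_ne x c₀ with rfl | hne
    · simp only [Function.update_self]; exact_mod_cast hv
    · rw [Function.update_of_ne hne]
      have := hval x (Finset.mem_erase.mpr ⟨hne, by exact_mod_cast hx⟩)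
      exact_mod_cast Finset.mem_of_mem_erase this
  · intro x hx y hy e
    by_cases hnex : x = c₀ <;> by_cases hney : y = c₀
    · rw [hnex, hney]
    · exfalso
      rw [hnex, Function.update_self, Function.update_of_ne hney] at e
      have := hval y (Finset.mem_erase.mpr ⟨hney, by exact_mod_cast hy⟩)
      rw [Finset.mem_erase] at this
      exact this.1 e.symm
    · exfalso
      rw [hney, Function.update_self, Function.update_of_ne hnex] at e
      have := hval x (Finset.mem_erase.mpr ⟨hnex, by exact_mod_cast hx⟩)
      rw [Finset.mem_erase] at this
      exact this.1 e
    · rw [Function.update_of_ne hnex, Function.update_of_ne hney] at e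
      exact hinj (by exact_mod_cast Finset.mem_erase.mpr ⟨hnex, by exact_mod_cast hx⟩)
        (by exact_mod_cast Finset.mem_erase.mpr ⟨hney, by exact_mod_cast hy⟩) e
  · intro v hv'
    rcases eq_or_ne v v₀ with rfl | hne
    · exact ⟨c₀, by exact_mod_cast hc, by simp⟩
    · obtain ⟨x, hx, he⟩ := hsurj (by
        exact_mod_cast Finset.mem_erase.mpr ⟨hne, by exact_mod_cast hv'⟩)
      have hxe : x ∈ C.erase c₀ := by exact_mod_cast hx
      refine ⟨x, by exact_mod_cast Finset.mem_of_mem_erase hxe, ?_⟩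
      rw [Function.update_of_ne (Finset.mem_erase.mp hxe).1]
      exact he
  · intro c hcC
    rcases eq_or_ne c c₀ with rfl | hne
    · simpa using hH0
    · rw [Function.update_of_ne hne]
      exact hH c (Finset.mem_erase.mpr ⟨hne, hcC⟩)

variable (hmono : MonoH H)
include hmono

theorem incr_exists_aux : ∀ (k : ℕ) (C V : Finset α) (σ : α → α), C.card ≤ k →
    Mtch H C V σ → ∃ σ', Mtch H C V σ' ∧ Incr C σ' := by
  classical
  intro k
  induction k with
  | zero =>
    intro C V σ hcard h
    rw [Nat.le_zero, Finset.card_eq_zero] at hcard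
    subst hcard
    exact ⟨σ, h, fun c hc => by simp at hc⟩
  | succ k IH =>
    intro C V σ hcard h
    rcases C.eq_empty_or_nonempty with rfl | hne
    · exact ⟨σ, h, fun c hc => by simp at hc⟩
    set c₁ := C.max' hne with hc₁
    have hVne := mtch_nonempty_v h hne
    set v₁ := V.max' hVne with hv₁
    obtain ⟨c₀, hc₀, hce⟩ := h.1.2.2 (show v₁ ∈ (↑V : Set α) by exact_mod_cast V.max'_mem hVne)
    have hc₀C : c₀ ∈ C := by exact_mod_cast hc₀
    have hGm : H c₁ v₁ := by
      refine hmono (h.2 c₁ (C.max'_mem hne)) le_rfl ?_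
      exact Finset.le_max' V _ (by exact_mod_cast h.1.1 (by exact_mod_cast C.max'_mem hne))
    have hG0 : H c₀ (σ c₁) := hmono (h.2 c₁ (C.max'_mem hne)) (Finset.le_max' C _ hc₀C) le_rfl
    have hsw := mtch_swap h hc₀C (C.max'_mem hne) hG0 (by rw [hce]; exact hGm)
    have hswc : (σ ∘ ⇑(Equiv.swap c₀ c₁)) c₁ = v₁ := by
      simp only [Function.comp_apply, Equiv.swap_apply_right]
      exact hce
    have her := hsw.erase (C.max'_mem hne)
    rw [hswc] at her
    obtain ⟨σ₂, hσ₂, hσ₂i⟩ := IH (C.erase c₁) (V.erase v₁) _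
      (by rw [Finset.card_erase_of_mem (C.max'_mem hne)]; omega) her
    refine ⟨Function.update σ₂ c₁ v₁, mtch_extend (C.max'_mem hne) (V.max'_mem hVne) hσ₂ hGm, ?_⟩
    intro c hc c' hc' hlt
    have hc'le : c' ≤ c₁ := Finset.le_max' C _ hc'
    have hcne : c ≠ c₁ := ne_of_lt (lt_of_lt_of_le hlt hc'le)
    rw [Function.update_of_ne hcne]
    have hcmem : c ∈ C.erase c₁ := Finset.mem_erase.mpr ⟨hcne, hc⟩
    have hσ₂cV : σ₂ c ∈ V.erase v₁ := by exact_mod_cast hσ₂.1.1 (by exact_mod_cast hcmem)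
    rcases eq_or_ne c' c₁ with rfl | hc'ne
    · rw [Function.update_self]
      rcases Finset.mem_erase.mp hσ₂cV with ⟨hne', hmem'⟩
      exact lt_of_le_of_ne (Finset.le_max' V _ hmem') hne'
    · rw [Function.update_of_ne hc'ne]
      exact hσ₂i c hcmem c' (Finset.mem_erase.mpr ⟨hc'ne, hc'⟩) hlt

theorem incr_exists {C V : Finset α} {σ : α → α} (h : Mtch H C V σ) :
    ∃ σ', Mtch H C V σ' ∧ Incr C σ' :=
  incr_exists_aux hmono C.card C V σ le_rfl h

theorem good_exists_aux : ∀ (k : ℕ) (C V : Finset α) (σ : α → α), C.card ≤ k →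
    Mtch H C V σ → ∃ σ', Mtch H C V σ' ∧ Good H C σ' := by
  classical
  intro k
  induction k with
  | zero =>
    intro C V σ hcard h
    rw [Nat.le_zero, Finset.card_eq_zero] at hcard
    subst hcard
    exact ⟨σ, h, fun c hc => by simp at hc⟩
  | succ k IH =>
    intro C V σ hcard h
    rcases C.eq_empty_or_nonempty with rfl | hne
    · exact ⟨σ, h, fun c hc => by simp at hc⟩
    set c₁ := C.max' hne with hc₁
    have hfmem : σ c₁ ∈ V.filter (fun v => H c₁ v) := by
      rw [Finset.mem_filter]
      exact ⟨by exact_mod_cast h.1.1 (by exact_mod_cast C.max'_mem hne), h.2 c₁ (C.max'_mem hne)⟩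
    have hfne : (V.filter (fun v => H c₁ v)).Nonempty := ⟨_, hfmem⟩
    set v₁ := (V.filter (fun v => H c₁ v)).min' hfne with hv₁
    have hv₁f := (V.filter (fun v => H c₁ v)).min'_mem hfne
    rw [Finset.mem_filter] at hv₁f
    obtain ⟨c₀, hc₀, hce⟩ := h.1.2.2 (show v₁ ∈ (↑V : Set α) by exact_mod_cast hv₁f.1)
    have hc₀C : c₀ ∈ C := by exact_mod_cast hc₀
    have hG0 : H c₀ (σ c₁) := hmono (h.2 c₁ (C.max'_mem hne)) (Finset.le_max' C _ hc₀C) le_rfl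
    have hsw := mtch_swap h hc₀C (C.max'_mem hne) hG0 (by rw [hce]; exact hv₁f.2)
    have hswc : (σ ∘ ⇑(Equiv.swap c₀ c₁)) c₁ = v₁ := by
      simp only [Function.comp_apply, Equiv.swap_apply_right]
      exact hce
    have her := hsw.erase (C.max'_mem hne)
    rw [hswc] at her
    obtain ⟨σ₂, hσ₂, hσ₂g⟩ := IH (C.erase c₁) (V.erase v₁) _
      (by rw [Finset.card_erase_of_mem (C.max'_mem hne)]; omega) her
    refine ⟨Function.update σ₂ c₁ v₁, mtch_extend (C.max'_mem hne) hv₁f.1 hσ₂ hv₁f.2, ?_⟩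
    intro c hc c' hc' hlt hval
    have hc'le : c' ≤ c₁ := Finset.le_max' C _ hc'
    have hcne : c ≠ c₁ := ne_of_lt (lt_of_lt_of_le hlt hc'le)
    rw [Function.update_of_ne hcne] at hval ⊢
    have hcmem : c ∈ C.erase c₁ := Finset.mem_erase.mpr ⟨hcne, hc⟩
    have hσ₂cV : σ₂ c ∈ V.erase v₁ := by exact_mod_cast hσ₂.1.1 (by exact_mod_cast hcmem)
    rcases eq_or_ne c' c₁ with rfl | hc'ne
    · rw [Function.update_self] at hval
      intro hcon
      have : σ₂ c ∈ V.filter (fun v => H c₁ v) :=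
        Finset.mem_filter.mpr ⟨Finset.mem_of_mem_erase hσ₂cV, hcon⟩
      have := Finset.min'_le _ _ this
      rw [← hv₁] at this
      exact absurd hval (not_lt.mpr this)
    · rw [Function.update_of_ne hc'ne] at hval
      exact hσ₂g c hcmem c' (Finset.mem_erase.mpr ⟨hc'ne, hc'⟩) hlt hval

theorem good_exists {C V : Finset α} {σ : α → α} (h : Mtch H C V σ) :
    ∃ σ', Mtch H C V σ' ∧ Good H C σ' :=
  good_exists_aux hmono C.card C V σ le_rfl h

end Matching


/-! ### Involution layer -/

section Invol

variable {n : ℕ}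

/-- interval (i,v) contains a non-fixed point of π (both coordinates). -/
def Hot (π : Equiv.Perm (Fin n)) (i v : Fin n) : Prop :=
  ∃ a, π a ≠ a ∧ i < a ∧ a < v ∧ i < π a ∧ π a < v

/-- x is an "inside letter". -/
def IL (π : Equiv.Perm (Fin n)) (x : Fin n) : Prop :=
  π x ≠ x ∧ Hot π (min x (π x)) (max x (π x))

def Cset (π : Equiv.Perm (Fin n)) : Finset (Fin n) :=
  @Finset.filter _ (fun x => IL π x ∧ x < π x) (Classical.decPred _) Finset.univ

def Vset (π : Equiv.Perm (Fin n)) : Finset (Fin n) :=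
  @Finset.filter _ (fun x => IL π x ∧ π x < x) (Classical.decPred _) Finset.univ

def CondA (π : Equiv.Perm (Fin n)) : Prop :=
  ∃ i j, i < j ∧ π j < π i ∧ Hot π j (π j)

def CondB (π : Equiv.Perm (Fin n)) : Prop :=
  ∃ i j, i < j ∧ π i < π j ∧ Hot π j (π i)

def Invol (π : Equiv.Perm (Fin n)) : Prop := ∀ x, π (π x) = x

theorem invol_iff (π : Equiv.Perm (Fin n)) : π⁻¹ = π ↔ Invol π := by
  constructor
  · intro h x
    nth_rewrite 1 [← h]
    exact π.symm_apply_apply x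
  · intro h
    refine Equiv.ext fun x => ?_
    apply π.injective
    rw [show π (π⁻¹ x) = x from π.apply_symm_apply x, h x]

theorem hot_mono {π : Equiv.Perm (Fin n)} : MonoH (Hot π) := by
  rintro c c' v v' ⟨a, h1, h2, h3, h4, h5⟩ hc hv
  exact ⟨a, h1, lt_of_le_of_lt hc h2, lt_of_lt_of_le h3 hv,
    lt_of_le_of_lt hc h4, lt_of_lt_of_le h5 hv⟩

theorem hot_lt {π : Equiv.Perm (Fin n)} {i v : Fin n} (h : Hot π i v) : i < v := by
  obtain ⟨a, _, h2, h3, _, _⟩ := h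
  exact lt_trans h2 h3

variable {π : Equiv.Perm (Fin n)}

theorem IL_apply (hπ : Invol π) {x : Fin n} : IL π (π x) ↔ IL π x := by
  unfold IL
  rw [hπ x, min_comm, max_comm]
  constructor
  · rintro ⟨h1, h2⟩; exact ⟨fun e => h1 (by rw [e]), h2⟩
  · rintro ⟨h1, h2⟩; exact ⟨fun e => h1 (by rw [← e]), h2⟩

theorem mem_Cset {x : Fin n} : x ∈ Cset π ↔ IL π x ∧ x < π x := by
  unfold Cset
  rw [@Finset.mem_filter]
  simp

theorem mem_Vset {x : Fin n} : x ∈ Vset π ↔ IL π x ∧ π x < x := by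
  unfold Vset
  rw [@Finset.mem_filter]
  simp

theorem cv_disj {x : Fin n} (hC : x ∈ Cset π) (hV : x ∈ Vset π) : False := by
  rw [mem_Cset] at hC; rw [mem_Vset] at hV
  exact absurd hC.2 (not_lt.mpr (le_of_lt hV.2))

theorem notin_both {x : Fin n} (hC : x ∉ Cset π) (hV : x ∉ Vset π) : ¬ IL π x := by
  intro hIL
  rcases lt_trichotomy x (π x) with h | h | h
  · exact hC (mem_Cset.mpr ⟨hIL, h⟩)
  · exact hIL.1 h.symm
  · exact hV (mem_Vset.mpr ⟨hIL, h⟩)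

theorem base_mtch (hπ : Invol π) : Mtch (Hot π) (Cset π) (Vset π) ⇑π := by
  refine ⟨⟨?_, ?_, ?_⟩, ?_⟩
  · intro x hx
    simp only [Finset.mem_coe] at *
    rw [mem_Cset] at hx
    rw [mem_Vset]
    exact ⟨(IL_apply hπ).mpr hx.1, by rw [hπ x]; exact hx.2⟩
  · intro x _ y _ e
    exact π.injective e
  · intro v hv
    simp only [Finset.mem_coe] at *
    rw [mem_Vset] at hv
    refine ⟨π v, ?_, hπ v⟩
    simp only [Finset.mem_coe]
    rw [mem_Cset]
    exact ⟨(IL_apply hπ).mpr hv.1, by rw [hπ v]; exact hv.2⟩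
  · intro c hc
    rw [mem_Cset] at hc
    have := hc.1.2
    rwa [min_eq_left (le_of_lt hc.2), max_eq_right (le_of_lt hc.2)] at this

theorem condA_iff (hπ : Invol π) : ¬ CondA π ↔ Incr (Cset π) ⇑π := by
  constructor
  · intro h c hc c' hc' hlt
    rw [mem_Cset] at hc hc'
    by_contra hcon
    push_neg at hcon
    have hne : π c' ≠ π c := fun e => (ne_of_lt hlt) (π.injective e.symm)
    have : π c' < π c := lt_of_le_of_ne hcon hne
    have hhot : Hot π c' (π c') := by
      have := hc'.1.2
      rwa [min_eq_left (le_of_lt hc'.2), max_eq_right (le_of_lt hc'.2)] at this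
    exact h ⟨c, c', hlt, this, hhot⟩
  · rintro h ⟨i, j, hij, hval, hhot⟩
    have hjlt : j < π j := hot_lt hhot
    have hj : j ∈ Cset π := by
      rw [mem_Cset]
      exact ⟨⟨ne_of_gt hjlt, by
        rwa [min_eq_left (le_of_lt hjlt), max_eq_right (le_of_lt hjlt)]⟩, hjlt⟩
    have hilt : i < π i := lt_trans (lt_trans hij hjlt) hval
    have hi : i ∈ Cset π := by
      rw [mem_Cset]
      refine ⟨⟨ne_of_gt hilt, ?_⟩, hilt⟩
      rw [min_eq_left (le_of_lt hilt), max_eq_right (le_of_lt hilt)]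
      exact hot_mono hhot (le_of_lt hij) (le_of_lt hval)
    exact absurd (h i hi j hj hij) (not_lt.mpr (le_of_lt hval))

theorem condB_iff (hπ : Invol π) : ¬ CondB π ↔ Good (Hot π) (Cset π) ⇑π := by
  constructor
  · intro h c hc c' hc' hlt hval hhot
    exact h ⟨c, c', hlt, hval, hhot⟩
  · rintro h ⟨i, j, hij, hval, hhot⟩
    have hjpi : j < π i := hot_lt hhot
    have hilt : i < π i := lt_trans hij hjpi
    have hjlt : j < π j := lt_trans hjpi hval
    have hi : i ∈ Cset π := by
      rw [mem_Cset]
      refine ⟨⟨ne_of_gt hilt, ?_⟩, hilt⟩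
      rw [min_eq_left (le_of_lt hilt), max_eq_right (le_of_lt hilt)]
      exact hot_mono hhot (le_of_lt hij) le_rfl
    have hj : j ∈ Cset π := by
      rw [mem_Cset]
      refine ⟨⟨ne_of_gt hjlt, ?_⟩, hjlt⟩
      rw [min_eq_left (le_of_lt hjlt), max_eq_right (le_of_lt hjlt)]
      exact hot_mono hhot le_rfl (le_of_lt hval)
    exact h i hi j hj hij hval hhot

/-- every hot interval has a witness that is not an inside letter -/
theorem hot_outside {i v : Fin n} (h : Hot π i v) :
    ∃ a, π a ≠ a ∧ ¬ IL π a ∧ i < a ∧ a < v ∧ i < π a ∧ π a < v := by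
  suffices hh : ∀ (k : ℕ) (i v : Fin n), v.val - i.val ≤ k → Hot π i v →
      ∃ a, π a ≠ a ∧ ¬ IL π a ∧ i < a ∧ a < v ∧ i < π a ∧ π a < v by
    exact hh (v.val - i.val) i v le_rfl h
  intro k
  induction k with
  | zero =>
    intro i v hk hhot
    have := hot_lt hhot
    rw [Fin.lt_def] at this
    omega
  | succ k IH =>
    intro i v hk hhot
    obtain ⟨a, h1, h2, h3, h4, h5⟩ := hhot
    by_cases hIL : IL π a
    · obtain ⟨a', g1, g2, g3, g4, g5, g6⟩ := IH (min a (π a)) (max a (π a)) (by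
        have hmin : i < min a (π a) := lt_min h2 h4
        have hmax : max a (π a) < v := max_lt h3 h5
        rw [Fin.lt_def] at hmin hmax
        omega) hIL.2
      have hmin : i < min a (π a) := lt_min h2 h4
      have hmax : max a (π a) < v := max_lt h3 h5
      exact ⟨a', g1, g2, lt_trans hmin g3, lt_trans g4 hmax,
        lt_trans hmin g5, lt_trans g6 hmax⟩
    · exact ⟨a, h1, hIL, h2, h3, h4, h5⟩


section Flip

variable {π : Equiv.Perm (Fin n)} {σ : Fin n → Fin n}

/-- explicit partial inverse of σ on C -/
def matchInv (σ : Fin n → Fin n) (C : Finset (Fin n)) (x : Fin n) : Fin n :=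
  if h : ∃ c ∈ C, σ c = x then h.choose else x

theorem matchInv_spec {C : Finset (Fin n)} {x : Fin n} (h : ∃ c ∈ C, σ c = x) :
    matchInv σ C x ∈ C ∧ σ (matchInv σ C x) = x := by
  rw [matchInv, dif_pos h]
  exact ⟨h.choose_spec.1, h.choose_spec.2⟩

theorem matchInv_apply {C : Finset (Fin n)} {c : Fin n} (hinj : Set.InjOn σ ↑C) (hc : c ∈ C) :
    matchInv σ C (σ c) = c := by
  have h : ∃ c' ∈ C, σ c' = σ c := ⟨c, hc, rfl⟩
  obtain ⟨h1, h2⟩ := matchInv_spec h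
  exact hinj (by exact_mod_cast h1) (by exact_mod_cast hc) h2

/-- replace the inside matching of π by σ -/
def flipFun (π : Equiv.Perm (Fin n)) (σ : Fin n → Fin n) : Fin n → Fin n := fun x =>
  if x ∈ Cset π then σ x else if x ∈ Vset π then matchInv σ (Cset π) x else π x

theorem flipFun_onC {x : Fin n} (hC : x ∈ Cset π) : flipFun π σ x = σ x := by
  simp only [flipFun]
  rw [if_pos hC]

theorem flipFun_onV {x : Fin n} (hC : x ∉ Cset π) (hV : x ∈ Vset π) :
    flipFun π σ x = matchInv σ (Cset π) x := by
  simp only [flipFun]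
  rw [if_neg hC, if_pos hV]

theorem flipFun_off {x : Fin n} (hC : x ∉ Cset π) (hV : x ∉ Vset π) : flipFun π σ x = π x := by
  simp only [flipFun]
  rw [if_neg hC, if_neg hV]

theorem flipFun_involutive (hπ : Invol π) (hm : Mtch (Hot π) (Cset π) (Vset π) σ) :
    Function.Involutive (flipFun π σ) := by
  have hinj : Set.InjOn σ ↑(Cset π) := hm.1.2.1
  intro x
  by_cases hC : x ∈ Cset π
  · have hσV : σ x ∈ Vset π := by exact_mod_cast hm.1.1 (by exact_mod_cast hC)
    have hσnC : σ x ∉ Cset π := fun hc => cv_disj hc hσV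
    rw [flipFun_onC hC, flipFun_onV hσnC hσV]
    exact matchInv_apply hinj hC
  by_cases hV : x ∈ Vset π
  · obtain ⟨c, hcC, hce⟩ := hm.1.2.2 (show x ∈ (↑(Vset π) : Set (Fin n)) by exact_mod_cast hV)
    have hex : ∃ a ∈ Cset π, σ a = x := ⟨c, by exact_mod_cast hcC, hce⟩
    obtain ⟨hmem, heq⟩ := matchInv_spec hex
    rw [flipFun_onV hC hV, flipFun_onC hmem, heq]
  · have hnIL := notin_both hC hV
    have hpiC : π x ∉ Cset π := fun hc => hnIL ((IL_apply hπ).mp (mem_Cset.mp hc).1)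
    have hpiV : π x ∉ Vset π := fun hc => hnIL ((IL_apply hπ).mp (mem_Vset.mp hc).1)
    rw [flipFun_off hC hV, flipFun_off hpiC hpiV]
    exact hπ x

/-- the flipped involution -/
noncomputable def flipPerm (hπ : Invol π) (hm : Mtch (Hot π) (Cset π) (Vset π) σ) :
    Equiv.Perm (Fin n) :=
  Function.Involutive.toPerm _ (flipFun_involutive hπ hm)

theorem flipPerm_apply (hπ : Invol π) (hm : Mtch (Hot π) (Cset π) (Vset π) σ) (x : Fin n) :
    flipPerm hπ hm x = flipFun π σ x := rfl

theorem flipPerm_invol (hπ : Invol π) (hm : Mtch (Hot π) (Cset π) (Vset π) σ) :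
    Invol (flipPerm hπ hm) := flipFun_involutive hπ hm

theorem flipPerm_off (hπ : Invol π) (hm : Mtch (Hot π) (Cset π) (Vset π) σ) {x : Fin n}
    (hC : x ∉ Cset π) (hV : x ∉ Vset π) : flipPerm hπ hm x = π x := by
  rw [flipPerm_apply, flipFun_off hC hV]

theorem flipPerm_onC (hπ : Invol π) (hm : Mtch (Hot π) (Cset π) (Vset π) σ) {x : Fin n}
    (hC : x ∈ Cset π) : flipPerm hπ hm x = σ x := by
  rw [flipPerm_apply, flipFun_onC hC]

theorem flipPerm_onV (hπ : Invol π) (hm : Mtch (Hot π) (Cset π) (Vset π) σ) {x : Fin n}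
    (hV : x ∈ Vset π) : flipPerm hπ hm x ∈ Cset π ∧ σ (flipPerm hπ hm x) = x := by
  obtain ⟨c, hcC, hce⟩ := hm.1.2.2 (show x ∈ (↑(Vset π) : Set (Fin n)) by exact_mod_cast hV)
  have hex : ∃ a ∈ Cset π, σ a = x := ⟨c, by exact_mod_cast hcC, hce⟩
  have hC : x ∉ Cset π := fun hc => cv_disj hc hV
  rw [flipPerm_apply, flipFun_onV hC hV]
  exact matchInv_spec hex

/-- cell of any inside σ-pair is hot and increasing -/
theorem pair_hot (hm : Mtch (Hot π) (Cset π) (Vset π) σ) {c : Fin n} (hc : c ∈ Cset π) :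
    Hot π c (σ c) ∧ c < σ c := by
  have := hm.2 c hc
  exact ⟨this, hot_lt this⟩

/-- key transfer: hot cells are preserved -/
theorem hot_transfer (hπ : Invol π) (hm : Mtch (Hot π) (Cset π) (Vset π) σ) :
    ∀ i v, Hot (flipPerm hπ hm) i v ↔ Hot π i v := by
  intro i v
  constructor
  · rintro ⟨a, h1, h2, h3, h4, h5⟩
    by_cases hC : a ∈ Cset π
    · obtain ⟨hhot, hlt⟩ := pair_hot hm hC
      rw [flipPerm_onC hπ hm hC] at h4 h5
      obtain ⟨b, g1, g2, g3, g4, g5⟩ := hhot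
      exact ⟨b, g1, lt_trans h2 g2, lt_trans g3 h5, lt_trans h2 g4, lt_trans g5 h5⟩
    by_cases hV : a ∈ Vset π
    · obtain ⟨hcC, hce⟩ := flipPerm_onV hπ hm hV
      obtain ⟨hhot, hlt⟩ := pair_hot hm hcC
      rw [hce] at hhot hlt
      obtain ⟨b, g1, g2, g3, g4, g5⟩ := hhot
      exact ⟨b, g1, lt_trans h4 g2, lt_trans g3 h3, lt_trans h4 g4, lt_trans g5 h3⟩
    · rw [flipPerm_off hπ hm hC hV] at h1 h4 h5
      exact ⟨a, fun e => h1 e, h2, h3, h4, h5⟩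
  · intro hhot
    obtain ⟨a, h1, hIL, h2, h3, h4, h5⟩ := hot_outside hhot
    have hC : a ∉ Cset π := fun hc => hIL (mem_Cset.mp hc).1
    have hV : a ∉ Vset π := fun hc => hIL (mem_Vset.mp hc).1
    rw [← flipPerm_off hπ hm hC hV] at h1 h4 h5
    exact ⟨a, h1, h2, h3, h4, h5⟩

theorem IL_transfer (hπ : Invol π) (hm : Mtch (Hot π) (Cset π) (Vset π) σ) :
    ∀ x, IL (flipPerm hπ hm) x ↔ IL π x := by
  intro x
  by_cases hC : x ∈ Cset π
  · obtain ⟨hhot, hlt⟩ := pair_hot hm hC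
    have happ := flipPerm_onC hπ hm hC
    constructor
    · intro _; exact (mem_Cset.mp hC).1
    · intro _
      refine ⟨by rw [happ]; exact ne_of_gt hlt, ?_⟩
      rw [happ, min_eq_left (le_of_lt hlt), max_eq_right (le_of_lt hlt),
        hot_transfer hπ hm]
      exact hhot
  by_cases hV : x ∈ Vset π
  · obtain ⟨hcC, hce⟩ := flipPerm_onV hπ hm hV
    obtain ⟨hhot, hlt⟩ := pair_hot hm hcC
    have hlt2 : flipPerm hπ hm x < x := by rw [hce] at hlt; exact hlt
    have hhot2 : Hot π (flipPerm hπ hm x) x := by rw [hce] at hhot; exact hhot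
    constructor
    · intro _; exact (mem_Vset.mp hV).1
    · intro _
      refine ⟨ne_of_lt hlt2, ?_⟩
      rw [min_eq_right (le_of_lt hlt2), max_eq_left (le_of_lt hlt2), hot_transfer hπ hm]
      exact hhot2
  · have happ := flipPerm_off hπ hm hC hV
    unfold IL
    rw [happ, hot_transfer hπ hm]

theorem Cset_transfer (hπ : Invol π) (hm : Mtch (Hot π) (Cset π) (Vset π) σ) :
    Cset (flipPerm hπ hm) = Cset π := by
  apply Finset.ext
  intro x
  rw [mem_Cset, mem_Cset, IL_transfer hπ hm]
  by_cases hC : x ∈ Cset π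
  · obtain ⟨hhot, hlt⟩ := pair_hot hm hC
    rw [flipPerm_onC hπ hm hC]
    have := mem_Cset.mp hC
    simp [this.1, hlt, this.2]
  by_cases hV : x ∈ Vset π
  · obtain ⟨hcC, hce⟩ := flipPerm_onV hπ hm hV
    obtain ⟨hhot, hlt⟩ := pair_hot hm hcC
    rw [hce] at hlt
    have hx := mem_Vset.mp hV
    constructor
    · rintro ⟨_, hlt2⟩
      exact absurd hlt2 (not_lt.mpr (le_of_lt hlt))
    · rintro ⟨_, hlt2⟩
      exact absurd hlt2 (not_lt.mpr (le_of_lt hx.2))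
  · have hnIL := notin_both hC hV
    rw [flipPerm_off hπ hm hC hV]

theorem Vset_transfer (hπ : Invol π) (hm : Mtch (Hot π) (Cset π) (Vset π) σ) :
    Vset (flipPerm hπ hm) = Vset π := by
  apply Finset.ext
  intro x
  rw [mem_Vset, mem_Vset, IL_transfer hπ hm]
  by_cases hC : x ∈ Cset π
  · obtain ⟨hhot, hlt⟩ := pair_hot hm hC
    rw [flipPerm_onC hπ hm hC]
    have hx := mem_Cset.mp hC
    constructor
    · rintro ⟨_, hlt2⟩
      exact absurd hlt2 (not_lt.mpr (le_of_lt hlt))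
    · rintro ⟨_, hlt2⟩
      exact absurd hlt2 (not_lt.mpr (le_of_lt hx.2))
  by_cases hV : x ∈ Vset π
  · obtain ⟨hcC, hce⟩ := flipPerm_onV hπ hm hV
    obtain ⟨hhot2, hlt2⟩ := pair_hot hm hcC
    rw [hce] at hlt2
    have hx := mem_Vset.mp hV
    constructor
    · intro _; exact hx
    · intro _; exact ⟨hx.1, hlt2⟩
  · have hnIL := notin_both hC hV
    rw [flipPerm_off hπ hm hC hV]

end Flip


end Invol

section PhiPsi

variable {n : ℕ}

theorem hot_funeq {π : Equiv.Perm (Fin n)} {σ : Fin n → Fin n} (hπ : Invol π)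
    (hm : Mtch (Hot π) (Cset π) (Vset π) σ) : Hot (flipPerm hπ hm) = Hot π :=
  funext fun i => funext fun v => propext (hot_transfer hπ hm i v)

noncomputable def Phi (π : Equiv.Perm (Fin n)) : Equiv.Perm (Fin n) :=
  if h : Invol π then flipPerm h ((good_exists hot_mono (base_mtch h)).choose_spec.1) else π

noncomputable def Psi (π : Equiv.Perm (Fin n)) : Equiv.Perm (Fin n) :=
  if h : Invol π then flipPerm h ((incr_exists hot_mono (base_mtch h)).choose_spec.1) else π

theorem good_congr {α : Type*} [LinearOrder α] {H : α → α → Prop} {C : Finset α}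
    {σ σ' : α → α} (hg : Good H C σ) (he : ∀ c ∈ C, σ c = σ' c) : Good H C σ' := by
  intro c hc c' hc' hlt hval
  rw [← he c hc, ← he c' hc'] at hval
  rw [← he c hc]
  exact hg c hc c' hc' hlt hval

theorem incr_congr {α : Type*} [LinearOrder α] {C : Finset α}
    {σ σ' : α → α} (hg : Incr C σ) (he : ∀ c ∈ C, σ c = σ' c) : Incr C σ' := by
  intro c hc c' hc' hlt
  rw [← he c hc, ← he c' hc']
  exact hg c hc c' hc' hlt

theorem phi_base (π : Equiv.Perm (Fin n)) (h : Invol π) :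
    Invol (Phi π) ∧ ¬ CondB (Phi π) ∧ Hot (Phi π) = Hot π ∧ Cset (Phi π) = Cset π ∧
      Vset (Phi π) = Vset π ∧
      (∀ c ∈ Cset π, Phi π c = (good_exists hot_mono (base_mtch h)).choose c) ∧
      (∀ x, x ∉ Cset π → x ∉ Vset π → Phi π x = π x) ∧
      (∀ x ∈ Vset π, Phi π x ∈ Cset π ∧
        (good_exists hot_mono (base_mtch h)).choose (Phi π x) = x) := by
  have hspec := (good_exists hot_mono (base_mtch h)).choose_spec
  set σg := (good_exists hot_mono (base_mtch h)).choose with hσg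
  have hPhi : Phi π = flipPerm h hspec.1 := by rw [Phi, dif_pos h]
  have hinv : Invol (Phi π) := by rw [hPhi]; exact flipPerm_invol h hspec.1
  have hhot : Hot (Phi π) = Hot π := by rw [hPhi]; exact hot_funeq h hspec.1
  have hcs : Cset (Phi π) = Cset π := by rw [hPhi]; exact Cset_transfer h hspec.1
  have hvs : Vset (Phi π) = Vset π := by rw [hPhi]; exact Vset_transfer h hspec.1
  have honC : ∀ c ∈ Cset π, Phi π c = σg c := by
    intro c hc; rw [hPhi]; exact flipPerm_onC h hspec.1 hc
  refine ⟨hinv, ?_, hhot, hcs, hvs, honC, ?_, ?_⟩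
  · rw [condB_iff hinv, hcs, hhot]
    exact good_congr hspec.2 (fun c hc => (honC c hc).symm)
  · intro x hxc hxv; rw [hPhi]; exact flipPerm_off h hspec.1 hxc hxv
  · intro x hx; rw [hPhi]; exact flipPerm_onV h hspec.1 hx

theorem psi_base (π : Equiv.Perm (Fin n)) (h : Invol π) :
    Invol (Psi π) ∧ ¬ CondA (Psi π) ∧ Hot (Psi π) = Hot π ∧ Cset (Psi π) = Cset π ∧
      Vset (Psi π) = Vset π ∧
      (∀ c ∈ Cset π, Psi π c = (incr_exists hot_mono (base_mtch h)).choose c) ∧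
      (∀ x, x ∉ Cset π → x ∉ Vset π → Psi π x = π x) ∧
      (∀ x ∈ Vset π, Psi π x ∈ Cset π ∧
        (incr_exists hot_mono (base_mtch h)).choose (Psi π x) = x) := by
  have hspec := (incr_exists hot_mono (base_mtch h)).choose_spec
  set σg := (incr_exists hot_mono (base_mtch h)).choose with hσg
  have hPhi : Psi π = flipPerm h hspec.1 := by rw [Psi, dif_pos h]
  have hinv : Invol (Psi π) := by rw [hPhi]; exact flipPerm_invol h hspec.1
  have hhot : Hot (Psi π) = Hot π := by rw [hPhi]; exact hot_funeq h hspec.1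
  have hcs : Cset (Psi π) = Cset π := by rw [hPhi]; exact Cset_transfer h hspec.1
  have hvs : Vset (Psi π) = Vset π := by rw [hPhi]; exact Vset_transfer h hspec.1
  have honC : ∀ c ∈ Cset π, Psi π c = σg c := by
    intro c hc; rw [hPhi]; exact flipPerm_onC h hspec.1 hc
  refine ⟨hinv, ?_, hhot, hcs, hvs, honC, ?_, ?_⟩
  · rw [condA_iff hinv, hcs]
    exact incr_congr hspec.2 (fun c hc => (honC c hc).symm)
  · intro x hxc hxv; rw [hPhi]; exact flipPerm_off h hspec.1 hxc hxv
  · intro x hx; rw [hPhi]; exact flipPerm_onV h hspec.1 hx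

theorem psi_phi {π : Equiv.Perm (Fin n)} (h : Invol π) (hA : ¬ CondA π) :
    Psi (Phi π) = π := by
  obtain ⟨hinv2, _, hhot2, hcs2, hvs2, honC2, hoff2, honV2⟩ := phi_base π h
  obtain ⟨hinv3, _, hhot3, hcs3, hvs3, honC3, hoff3, honV3⟩ := psi_base (Phi π) hinv2
  set π₂ := Phi π
  set σi := (incr_exists hot_mono (base_mtch hinv2)).choose with hσi
  have hspec := (incr_exists hot_mono (base_mtch hinv2)).choose_spec
  -- π itself is an increasing matching for (Hot π₂, Cset π₂, Vset π₂)
  have hπm : Mtch (Hot π₂) (Cset π₂) (Vset π₂) ⇑π := by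
    rw [hhot2, hcs2, hvs2]; exact base_mtch h
  have hπi : Incr (Cset π₂) ⇑π := by
    rw [hcs2]; exact (condA_iff h).mp hA
  have huniq := incr_unique hspec.1 hspec.2 hπm hπi
  refine Equiv.ext fun x => ?_
  by_cases hxC : x ∈ Cset π
  · rw [honC3 x (by rw [hcs2]; exact hxC)]
    exact huniq x (by rw [hcs2]; exact hxC)
  by_cases hxV : x ∈ Vset π
  · obtain ⟨hmem, heq⟩ := honV3 x (by rw [hvs2]; exact hxV)
    rw [hcs2] at hmem
    have : π (Psi π₂ x) = x := (huniq _ (by rw [hcs2]; exact hmem)).symm.trans heq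
    have h2 : π (Psi π₂ x) = π (π x) := by rw [this, h x]
    exact π.injective h2
  · rw [hoff3 x (by rw [hcs2]; exact hxC) (by rw [hvs2]; exact hxV)]
    exact hoff2 x hxC hxV

theorem phi_psi {π : Equiv.Perm (Fin n)} (h : Invol π) (hB : ¬ CondB π) :
    Phi (Psi π) = π := by
  obtain ⟨hinv2, _, hhot2, hcs2, hvs2, honC2, hoff2, honV2⟩ := psi_base π h
  obtain ⟨hinv3, _, hhot3, hcs3, hvs3, honC3, hoff3, honV3⟩ := phi_base (Psi π) hinv2
  set π₂ := Psi π
  set σg := (good_exists hot_mono (base_mtch hinv2)).choose with hσg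
  have hspec := (good_exists hot_mono (base_mtch hinv2)).choose_spec
  have hπm : Mtch (Hot π₂) (Cset π₂) (Vset π₂) ⇑π := by
    rw [hhot2, hcs2, hvs2]; exact base_mtch h
  have hπg : Good (Hot π₂) (Cset π₂) ⇑π := by
    rw [hhot2, hcs2]; exact (condB_iff h).mp hB
  have huniq := good_unique hspec.1 hspec.2 hπm hπg
  refine Equiv.ext fun x => ?_
  by_cases hxC : x ∈ Cset π
  · rw [honC3 x (by rw [hcs2]; exact hxC)]
    exact huniq x (by rw [hcs2]; exact hxC)
  by_cases hxV : x ∈ Vset π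
  · obtain ⟨hmem, heq⟩ := honV3 x (by rw [hvs2]; exact hxV)
    rw [hcs2] at hmem
    have : π (Phi π₂ x) = x := (huniq _ (by rw [hcs2]; exact hmem)).symm.trans heq
    have h2 : π (Phi π₂ x) = π (π x) := by rw [this, h x]
    exact π.injective h2
  · rw [hoff3 x (by rw [hcs2]; exact hxC) (by rw [hvs2]; exact hxV)]
    exact hoff2 x hxC hxV

end PhiPsi

section Pattern

variable {n : ℕ} {π : Equiv.Perm (Fin n)}

theorem contains_of (τ : Equiv.Perm (Fin 6)) (x : Fin 6 → Fin n)
    (hmono : StrictMono x) (h : ∀ a b : Fin 6, τ a < τ b → π (x a) < π (x b)) :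
    PermContains π τ := by
  refine ⟨x, hmono, fun a b => ⟨h a b, fun hab => ?_⟩⟩
  rcases lt_trichotomy (τ a) (τ b) with hc | hc | hc
  · exact hc
  · exfalso
    have : a = b := τ.injective hc
    subst this
    exact lt_irrefl _ hab
  · exact absurd hab (not_lt.mpr (le_of_lt (h b a hc)))

theorem contains_to_condA (hπ : Invol π) (h : PermContains π p654321) : CondA π := by
  obtain ⟨f, hmono, hf⟩ := h
  have m12 : f 1 < f 2 := hmono (by decide)
  have m23 : f 2 < f 3 := hmono (by decide)
  have m34 : f 3 < f 4 := hmono (by decide)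
  have m45 : f 4 < f 5 := hmono (by decide)
  have v10 : π (f 1) < π (f 0) := (hf 1 0).mp (by decide)
  have v21 : π (f 2) < π (f 1) := (hf 2 1).mp (by decide)
  have v32 : π (f 3) < π (f 2) := (hf 3 2).mp (by decide)
  have v43 : π (f 4) < π (f 3) := (hf 4 3).mp (by decide)
  have v54 : π (f 5) < π (f 4) := (hf 5 4).mp (by decide)
  by_cases hc : f 2 < π (f 2)
  · exact ⟨f 0, f 1, hmono (by decide), v10,
      ⟨f 2, ne_of_gt hc, m12, lt_trans hc v21, lt_trans m12 hc, v21⟩⟩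
  · push_neg at hc
    have hf3 : π (f 3) < f 3 := lt_trans (lt_of_lt_of_le v32 hc) m23
    refine ⟨π (f 5), π (f 4), v54, ?_, ?_⟩
    · rw [hπ, hπ]; exact m45
    · rw [hπ]
      refine ⟨π (f 3), ?_, v43, lt_trans hf3 m34, ?_, ?_⟩
      · rw [hπ]; exact ne_of_gt hf3
      · rw [hπ]; exact lt_trans v43 hf3
      · rw [hπ]; exact m34

theorem condA_to_contains (hπ : Invol π) (h : CondA π) : PermContains π p654321 := by
  obtain ⟨i, j, hij, hval, a, hane, ha1, ha2, ha3, ha4⟩ := h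
  have hcd : min a (π a) < max a (π a) := min_lt_max.mpr (Ne.symm hane)
  have hπc : π (min a (π a)) = max a (π a) := by
    rcases le_total a (π a) with hle | hle
    · rw [min_eq_left hle, max_eq_right hle]
    · rw [min_eq_right hle, max_eq_left hle, hπ]
  have hπd : π (max a (π a)) = min a (π a) := by
    rcases le_total a (π a) with hle | hle
    · rw [min_eq_left hle, max_eq_right hle, hπ]
    · rw [min_eq_right hle, max_eq_left hle]
  set c := min a (π a)
  set d := max a (π a)
  have hjc : j < c := lt_min ha1 ha3
  have hdj : d < π j := max_lt ha2 ha4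
  apply contains_of p654321 ![i, j, c, d, π j, π i]
  · rw [Fin.strictMono_iff_lt_succ]
    intro k
    fin_cases k <;>
      first | exact hij | exact hjc | exact hcd | exact hdj | exact hval
  · have F10 : π j < π i := hval
    have F21 : π c < π j := by rw [hπc]; exact hdj
    have F32 : π d < π c := by rw [hπc, hπd]; exact hcd
    have F43 : π (π j) < π d := by rw [hπ, hπd]; exact hjc
    have F54 : π (π i) < π (π j) := by rw [hπ, hπ]; exact hij
    have F20 := lt_trans F21 F10
    have F31 := lt_trans F32 F21
    have F30 := lt_trans F31 F10
    have F42 := lt_trans F43 F32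
    have F41 := lt_trans F42 F21
    have F40 := lt_trans F41 F10
    have F53 := lt_trans F54 F43
    have F52 := lt_trans F53 F32
    have F51 := lt_trans F52 F21
    have F50 := lt_trans F51 F10
    intro a' b' hτ
    fin_cases a' <;> fin_cases b' <;>
      first
        | exact absurd hτ (by decide)
        | exact F10 | exact F21 | exact F32 | exact F43 | exact F54
        | exact F20 | exact F31 | exact F30 | exact F42 | exact F41
        | exact F40 | exact F53 | exact F52 | exact F51 | exact F50

theorem contains_to_condB (hπ : Invol π) (h : PermContains π p564312) : CondB π := by
  obtain ⟨f, hmono, hf⟩ := h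
  have m01 : f 0 < f 1 := hmono (by decide)
  have m12 : f 1 < f 2 := hmono (by decide)
  have m23 : f 2 < f 3 := hmono (by decide)
  have m34 : f 3 < f 4 := hmono (by decide)
  have m45 : f 4 < f 5 := hmono (by decide)
  have v01 : π (f 0) < π (f 1) := (hf 0 1).mp (by decide)
  have v45 : π (f 4) < π (f 5) := (hf 4 5).mp (by decide)
  have v53 : π (f 5) < π (f 3) := (hf 5 3).mp (by decide)
  have v32 : π (f 3) < π (f 2) := (hf 3 2).mp (by decide)
  have v20 : π (f 2) < π (f 0) := (hf 2 0).mp (by decide)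
  have hmid : ∃ c, π c ≠ c ∧ f 1 < c ∧ c < f 4 ∧ π (f 5) < π c ∧ π c < π (f 0) := by
    by_cases hfix : π (f 2) = f 2
    · refine ⟨f 3, ?_, lt_trans m12 m23, m34, v53, lt_trans v32 v20⟩
      intro heq
      rw [heq, hfix] at v32
      exact absurd v32 (not_lt.mpr (le_of_lt m23))
    · exact ⟨f 2, hfix, m12, lt_trans m23 m34, lt_trans v53 v32, v20⟩
  obtain ⟨c, hcne, hc1, hc2, hc3, hc4⟩ := hmid
  by_cases hopt1 : f 1 < π c ∧ c < π (f 0)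
  · exact ⟨f 0, f 1, m01, v01, ⟨c, hcne, hc1, hopt1.2, hopt1.1, hc4⟩⟩
  by_cases hopt2 : π (f 5) < c ∧ π c < f 4
  · refine ⟨π (f 4), π (f 5), v45, ?_, ?_⟩
    · rw [hπ, hπ]; exact m45
    · rw [hπ]
      exact ⟨c, hcne, hopt2.1, hc2, hopt2.2.trans_le (le_refl _) |>.trans_le (le_refl _) |> fun _ => hc3, hopt2.2⟩
  · exfalso
    have k1 : (f 1 : ℕ) < (c : ℕ) := hc1
    have k2 : (c : ℕ) < (f 4 : ℕ) := hc2
    have k3 : (π (f 5) : ℕ) < (π c : ℕ) := hc3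
    have k4 : (π c : ℕ) < (π (f 0) : ℕ) := hc4
    have k5 : ¬((f 1 : ℕ) < (π c : ℕ) ∧ (c : ℕ) < (π (f 0) : ℕ)) := by
      intro hcon; exact hopt1 ⟨hcon.1, hcon.2⟩
    have k6 : ¬((π (f 5) : ℕ) < (c : ℕ) ∧ (π c : ℕ) < (f 4 : ℕ)) := by
      intro hcon; exact hopt2 ⟨hcon.1, hcon.2⟩
    omega

theorem condB_to_contains (hπ : Invol π) (h : CondB π) : PermContains π p564312 := by
  obtain ⟨i, j, hij, hval, a, hane, ha1, ha2, ha3, ha4⟩ := h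
  have hcd : min a (π a) < max a (π a) := min_lt_max.mpr (Ne.symm hane)
  have hπc : π (min a (π a)) = max a (π a) := by
    rcases le_total a (π a) with hle | hle
    · rw [min_eq_left hle, max_eq_right hle]
    · rw [min_eq_right hle, max_eq_left hle, hπ]
  have hπd : π (max a (π a)) = min a (π a) := by
    rcases le_total a (π a) with hle | hle
    · rw [min_eq_left hle, max_eq_right hle, hπ]
    · rw [min_eq_right hle, max_eq_left hle]
  set c := min a (π a)
  set d := max a (π a)
  have hjc : j < c := lt_min ha1 ha3
  have hdi : d < π i := max_lt ha2 ha4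
  apply contains_of p564312 ![i, j, c, d, π i, π j]
  · rw [Fin.strictMono_iff_lt_succ]
    intro k
    fin_cases k <;>
      first | exact hij | exact hjc | exact hcd | exact hdi | exact hval
  · have G45 : π (π i) < π (π j) := by rw [hπ, hπ]; exact hij
    have G53 : π (π j) < π d := by rw [hπ, hπd]; exact hjc
    have G32 : π d < π c := by rw [hπd, hπc]; exact hcd
    have G20 : π c < π i := by rw [hπc]; exact hdi
    have G01 : π i < π j := hval
    have G43 := lt_trans G45 G53
    have G42 := lt_trans G43 G32
    have G40 := lt_trans G42 G20
    have G41 := lt_trans G40 G01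
    have G52 := lt_trans G53 G32
    have G50 := lt_trans G52 G20
    have G51 := lt_trans G50 G01
    have G30 := lt_trans G32 G20
    have G31 := lt_trans G30 G01
    have G21 := lt_trans G20 G01
    intro a' b' hτ
    fin_cases a' <;> fin_cases b' <;>
      first
        | exact absurd hτ (by decide)
        | exact G45 | exact G53 | exact G32 | exact G20 | exact G01
        | exact G43 | exact G42 | exact G40 | exact G41 | exact G52
        | exact G50 | exact G51 | exact G30 | exact G31 | exact G21

theorem condA_iff_contains (hπ : Invol π) : PermContains π p654321 ↔ CondA π :=
  ⟨contains_to_condA hπ, condA_to_contains hπ⟩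

theorem condB_iff_contains (hπ : Invol π) : PermContains π p564312 ↔ CondB π :=
  ⟨contains_to_condB hπ, condB_to_contains hπ⟩

end Pattern

end Stmt7Aux

/-- |I_n(654321)| = |I_n(564312)| for every n ≥ 1. -/
theorem stmt7 : ∀ n : ℕ, 1 ≤ n → IAvoidCount n p654321 = IAvoidCount n p564312 := by
  intro n _
  unfold IAvoidCount
  have hSA : {π : Equiv.Perm (Fin n) | π⁻¹ = π ∧ ¬ PermContains π p654321}
      = {π : Equiv.Perm (Fin n) | Invol π ∧ ¬ CondA π} := by
    ext π
    simp only [Set.mem_setOf_eq]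
    constructor
    · rintro ⟨h1, h2⟩
      have h1' := (invol_iff π).mp h1
      exact ⟨h1', fun hc => h2 ((condA_iff_contains h1').mpr hc)⟩
    · rintro ⟨h1, h2⟩
      exact ⟨(invol_iff π).mpr h1, fun hc => h2 ((condA_iff_contains h1).mp hc)⟩
  have hSB : {π : Equiv.Perm (Fin n) | π⁻¹ = π ∧ ¬ PermContains π p564312}
      = {π : Equiv.Perm (Fin n) | Invol π ∧ ¬ CondB π} := by
    ext π
    simp only [Set.mem_setOf_eq]
    constructor
    · rintro ⟨h1, h2⟩
      have h1' := (invol_iff π).mp h1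
      exact ⟨h1', fun hc => h2 ((condB_iff_contains h1').mpr hc)⟩
    · rintro ⟨h1, h2⟩
      exact ⟨(invol_iff π).mpr h1, fun hc => h2 ((condB_iff_contains h1).mp hc)⟩
  rw [hSA, hSB]
  set A := {π : Equiv.Perm (Fin n) | Invol π ∧ ¬ CondA π} with hA
  set B := {π : Equiv.Perm (Fin n) | Invol π ∧ ¬ CondB π} with hB
  have himg : Phi '' A = B := by
    apply Set.eq_of_subset_of_subset
    · rintro _ ⟨π, hπA, rfl⟩
      rw [hA, Set.mem_setOf_eq] at hπA
      obtain ⟨hinv2, hnB, _⟩ := phi_base π hπA.1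
      rw [hB, Set.mem_setOf_eq]
      exact ⟨hinv2, hnB⟩
    · intro π₂ hπ₂B
      rw [hB, Set.mem_setOf_eq] at hπ₂B
      obtain ⟨hinv3, hnA, _⟩ := psi_base π₂ hπ₂B.1
      refine ⟨Psi π₂, ?_, phi_psi hπ₂B.1 hπ₂B.2⟩
      rw [hA, Set.mem_setOf_eq]
      exact ⟨hinv3, hnA⟩
  have hinj : Set.InjOn Phi A := by
    intro a ha b hb he
    rw [hA, Set.mem_setOf_eq] at ha hb
    have h1 : Psi (Phi a) = a := psi_phi ha.1 ha.2
    have h2 : Psi (Phi b) = b := psi_phi hb.1 hb.2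
    rw [← h1, ← h2, he]
  rw [← himg]
  exact (Set.ncard_image_of_injOn hinj).symm
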